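/- arXiv:1305.5211 — 2 statements merged into one kernel-verified Lean document; each statement's English description precedes it below -/
import Mathlib

section
/- Let A = B + iC be an n×n generalized Higham matrix (B, C Hermitian positive definite) and let ρ_n(A) = max_{i,j,k}|a_{ij}^{(k)}| / max_{i,j}|a_{ij}| be the growth factor in Gaussian elimination without pivoting. Then 4κ/(1+κ)² ≤ ρ_n(A) ≤ 2(1+κ²)/(1+κ)² ≤ 2, where κ = max{κ(B), κ(C)} and κ(M) is the spectral condition number. -/
open Matrix Complex Finset
open scoped ComplexOrder

/-- The spectral condition number of a Hermitian matrix: the ratio of its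
largest to its smallest eigenvalue. -/
noncomputable def condNum {m : Type*} [Fintype m] [DecidableEq m]
    {M : Matrix m m ℂ} (hM : M.IsHermitian) : ℝ :=
  (⨆ i, hM.eigenvalues i) / (⨅ i, hM.eigenvalues i)

/-- One step of Gaussian elimination (without pivoting) with pivot `k`. -/
noncomputable def elimStep {n : ℕ} (k : Fin n) (M : Matrix (Fin n) (Fin n) ℂ) :
    Matrix (Fin n) (Fin n) ℂ :=
  fun i j => if k < i ∧ k < j then M i j - M i k * (M k k)⁻¹ * M k j else M i j

/-- `elimIter A k = A^{(k)}`, the matrix after `k` steps of Gaussian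
elimination without pivoting applied to `A`. -/
noncomputable def elimIter {n : ℕ} (A : Matrix (Fin n) (Fin n) ℂ) : ℕ → Matrix (Fin n) (Fin n) ℂ
  | 0 => A
  | k + 1 => if h : k < n then elimStep ⟨k, h⟩ (elimIter A k) else elimIter A k

/-- The growth factor `ρ_n(A) = max_{i,j,k} |a_{ij}^{(k)}| / max_{i,j} |a_{ij}|`
of Gaussian elimination without pivoting. -/
noncomputable def growthFactor {n : ℕ} (A : Matrix (Fin (n + 1)) (Fin (n + 1)) ℂ) : ℝ :=
  ((Finset.range (n + 1)).product
      ((Finset.univ : Finset (Fin (n + 1))).product Finset.univ)).sup'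
      (Finset.Nonempty.product ⟨0, by simp⟩ (Finset.Nonempty.product Finset.univ_nonempty Finset.univ_nonempty))
      (fun p => ‖elimIter A p.1 p.2.1 p.2.2‖) /
    (Finset.univ.sup' Finset.univ_nonempty
      fun p : Fin (n + 1) × Fin (n + 1) => ‖A p.1 p.2‖)

namespace GHWork

variable {N : ℕ}

/-- sesquilinear form of a matrix -/
noncomputable def qf (M : Matrix (Fin N) (Fin N) ℂ) (u v : Fin N → ℂ) : ℂ :=
  star u ⬝ᵥ M.mulVec v

lemma qf_add_right (M : Matrix (Fin N) (Fin N) ℂ) (u v w : Fin N → ℂ) :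
    qf M u (v + w) = qf M u v + qf M u w := by
  simp [qf, mulVec_add, dotProduct_add]

lemma qf_smul_right (M : Matrix (Fin N) (Fin N) ℂ) (a : ℂ) (u v : Fin N → ℂ) :
    qf M u (a • v) = a * qf M u v := by
  simp [qf, mulVec_smul, dotProduct_smul, smul_eq_mul]

lemma qf_add_left (M : Matrix (Fin N) (Fin N) ℂ) (u v w : Fin N → ℂ) :
    qf M (u + v) w = qf M u w + qf M v w := by
  simp [qf, add_dotProduct]

lemma qf_smul_left (M : Matrix (Fin N) (Fin N) ℂ) (a : ℂ) (u v : Fin N → ℂ) :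
    qf M (a • u) v = (starRingEnd ℂ) a * qf M u v := by
  simp [qf, smul_dotProduct, smul_eq_mul]

lemma qf_conj {M : Matrix (Fin N) (Fin N) ℂ} (hM : M.IsHermitian) (u v : Fin N → ℂ) :
    qf M u v = (starRingEnd ℂ) (qf M v u) := by
  unfold qf
  rw [star_dotProduct]
  rw [star_mulVec, ← dotProduct_mulVec, hM.eq]
  rfl

lemma qf_self_re {M : Matrix (Fin N) (Fin N) ℂ} (hM : M.IsHermitian) (u : Fin N → ℂ) :
    (qf M u u : ℂ) = ((qf M u u).re : ℂ) := by
  have h := qf_conj hM u u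
  have him : (qf M u u).im = 0 := by
    have := congrArg Complex.im h
    simp at this
    linarith
  exact Complex.ext rfl (by simp [him])

lemma qf_quad (M : Matrix (Fin N) (Fin N) ℂ) (t : ℝ) (u w : Fin N → ℂ) :
    qf M ((t : ℂ) • u + w) ((t : ℂ) • u + w)
      = (t : ℂ) ^ 2 * qf M u u + (t : ℂ) * qf M u w + (t : ℂ) * qf M w u + qf M w w := by
  rw [qf_add_left, qf_add_right, qf_add_right, qf_smul_left, qf_smul_right, qf_smul_right,
    qf_smul_left, Complex.conj_ofReal]
  ring

/-- Cauchy-Schwarz for a PSD hermitian form -/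
lemma qf_cs {M : Matrix (Fin N) (Fin N) ℂ} (hM : M.IsHermitian)
    (hnn : ∀ x, 0 ≤ (qf M x x).re) (u v : Fin N → ℂ) :
    ‖qf M u v‖ ≤ Real.sqrt (qf M u u).re * Real.sqrt (qf M v v).re := by
  rcases eq_or_ne (qf M u v) 0 with h0 | h0
  · rw [h0]
    simp [Real.sqrt_nonneg, mul_nonneg]
  · set q := qf M u v with hq
    have habs : (‖q‖ : ℝ) ≠ 0 := by simpa using h0
    have habsC : ((‖q‖ : ℝ) : ℂ) ≠ 0 := Complex.ofReal_ne_zero.mpr habs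
    obtain ⟨c, hcq, hcc⟩ : ∃ c : ℂ, c * q = (‖q‖ : ℂ) ∧ c * (starRingEnd ℂ) c = 1 := by
      refine ⟨(starRingEnd ℂ) q / (‖q‖ : ℂ), ?_, ?_⟩
      · rw [div_mul_eq_mul_div, mul_comm ((starRingEnd ℂ) q) q, Complex.mul_conj,
          ← Complex.sq_norm]
        push_cast
        rw [pow_two, mul_div_assoc, div_self habsC, mul_one]
      · rw [map_div₀, Complex.conj_conj, Complex.conj_ofReal, div_mul_div_comm,
          mul_comm ((starRingEnd ℂ) q) q, Complex.mul_conj, ← Complex.sq_norm, ← Complex.ofReal_mul,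
          ← pow_two]
        push_cast
        rw [div_self (by positivity)]
    set w := c • v with hw
    have huw : qf M u w = (‖q‖ : ℂ) := by
      rw [hw, qf_smul_right, ← hq, hcq]
    have hww : (qf M w w).re = (qf M v v).re := by
      rw [hw, qf_smul_right, qf_smul_left, ← mul_assoc, hcc, one_mul]
    have key : ∀ t : ℝ, 0 ≤ (qf M u u).re * (t * t) + (2 * ‖q‖) * t + (qf M v v).re := by
      intro t
      have h := hnn ((t : ℂ) • u + w)
      have hwu : qf M w u = (‖q‖ : ℂ) := by
        rw [qf_conj hM, huw]
        simp
      rw [qf_quad, hwu, huw] at h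
      have hre : ((t : ℂ) ^ 2 * qf M u u + (t : ℂ) * (‖q‖ : ℂ)
          + (t : ℂ) * (‖q‖ : ℂ) + qf M w w).re
          = (qf M u u).re * (t * t) + (2 * ‖q‖) * t + (qf M w w).re := by
        simp [Complex.add_re, Complex.mul_re, Complex.ofReal_re, Complex.ofReal_im, pow_two]
        ring
      rw [hre, hww] at h
      exact h
    have hd := discrim_le_zero key
    unfold discrim at hd
    have h2 : (‖q‖) ^ 2 ≤ (qf M u u).re * (qf M v v).re := by nlinarith
    calc ‖q‖ = Real.sqrt ((‖q‖) ^ 2) := by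
          rw [Real.sqrt_sq (norm_nonneg q)]
      _ ≤ Real.sqrt ((qf M u u).re * (qf M v v).re) := Real.sqrt_le_sqrt h2
      _ = Real.sqrt (qf M u u).re * Real.sqrt (qf M v v).re := Real.sqrt_mul (hnn u) _

lemma qf_matrix_add (P Q : Matrix (Fin N) (Fin N) ℂ) (u v : Fin N → ℂ) :
    qf (P + Q) u v = qf P u v + qf Q u v := by
  simp [qf, add_mulVec, dotProduct_add]

lemma qf_matrix_sub (P Q : Matrix (Fin N) (Fin N) ℂ) (u v : Fin N → ℂ) :
    qf (P - Q) u v = qf P u v - qf Q u v := by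
  simp [qf, sub_mulVec, dotProduct_sub]

lemma qf_matrix_smul (a : ℂ) (P : Matrix (Fin N) (Fin N) ℂ) (u v : Fin N → ℂ) :
    qf (a • P) u v = a * qf P u v := by
  simp [qf, smul_mulVec, dotProduct_smul, smul_eq_mul]

lemma sqrt_cs2 {a b c d : ℝ} (ha : 0 ≤ a) (hb : 0 ≤ b) (hc : 0 ≤ c) (hd : 0 ≤ d) :
    Real.sqrt a * Real.sqrt b + Real.sqrt c * Real.sqrt d
      ≤ Real.sqrt (a + c) * Real.sqrt (b + d) := by
  rw [← Real.sqrt_mul ha, ← Real.sqrt_mul hc, ← Real.sqrt_mul (by linarith)]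
  have key : (Real.sqrt (a * b) + Real.sqrt (c * d)) ^ 2 ≤ (a + c) * (b + d) := by
    have h1 : Real.sqrt (a * b) ^ 2 = a * b := Real.sq_sqrt (mul_nonneg ha hb)
    have h2 : Real.sqrt (c * d) ^ 2 = c * d := Real.sq_sqrt (mul_nonneg hc hd)
    have h3 : Real.sqrt (a * b) * Real.sqrt (c * d) = Real.sqrt (a * d) * Real.sqrt (c * b) := by
      rw [← Real.sqrt_mul (mul_nonneg ha hb), ← Real.sqrt_mul (mul_nonneg ha hd)]
      ring_nf
    have h4 : 2 * (Real.sqrt (a * d) * Real.sqrt (c * b)) ≤ a * d + c * b := by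
      nlinarith [sq_nonneg (Real.sqrt (a * d) - Real.sqrt (c * b)),
        Real.sq_sqrt (mul_nonneg ha hd), Real.sq_sqrt (mul_nonneg hc hb)]
    nlinarith
  have h5 : 0 ≤ Real.sqrt (a * b) + Real.sqrt (c * d) := by positivity
  calc Real.sqrt (a * b) + Real.sqrt (c * d)
      = Real.sqrt ((Real.sqrt (a * b) + Real.sqrt (c * d)) ^ 2) := by
        rw [Real.sqrt_sq h5]
    _ ≤ Real.sqrt ((a + c) * (b + d)) := Real.sqrt_le_sqrt key

lemma k_bound {H K : Matrix (Fin N) (Fin N) ℂ} {τ : ℝ}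
    (hH : H.IsHermitian) (hK : K.IsHermitian) (ht : 0 ≤ τ)
    (hP : ∀ x, 0 ≤ (qf ((τ : ℂ) • H + K) x x).re)
    (hQ : ∀ x, 0 ≤ (qf ((τ : ℂ) • H - K) x x).re) (u v : Fin N → ℂ) :
    ‖qf K u v‖ ≤ τ * (Real.sqrt (qf H u u).re * Real.sqrt (qf H v v).re) := by
  have hτH : ((τ : ℂ) • H).IsHermitian := by
    unfold Matrix.IsHermitian
    rw [conjTranspose_smul, hH.eq]
    congr 1
    simp
  have hPH : ((τ : ℂ) • H + K).IsHermitian := hτH.add hK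
  have hQH : ((τ : ℂ) • H - K).IsHermitian := hτH.sub hK
  have hPu := qf_cs hPH hP u v
  have hQu := qf_cs hQH hQ u v
  have habs : ‖qf K u v‖
      ≤ (‖qf ((τ : ℂ) • H + K) u v‖ + ‖qf ((τ : ℂ) • H - K) u v‖) / 2 := by
    have hKuv : qf K u v = (qf ((τ : ℂ) • H + K) u v - qf ((τ : ℂ) • H - K) u v) / 2 := by
      rw [qf_matrix_add, qf_matrix_sub]
      ring
    rw [hKuv, norm_div]
    simp only [Complex.norm_two]
    gcongr
    exact (norm_sub_le _ _)
  have hsum : ∀ x : Fin N → ℂ, (qf ((τ : ℂ) • H + K) x x).re + (qf ((τ : ℂ) • H - K) x x).re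
      = 2 * τ * (qf H x x).re := by
    intro x
    rw [qf_matrix_add, qf_matrix_sub, qf_matrix_smul]
    simp [Complex.add_re, Complex.sub_re, Complex.mul_re, Complex.ofReal_re, Complex.ofReal_im]
    ring
  have hcs2 := sqrt_cs2 (hP u) (hP v) (hQ u) (hQ v)
  rw [hsum u, hsum v] at hcs2
  have h2t : (0 : ℝ) ≤ 2 * τ := by linarith
  have hfin : Real.sqrt (2 * τ * (qf H u u).re) * Real.sqrt (2 * τ * (qf H v v).re)
      = 2 * τ * (Real.sqrt (qf H u u).re * Real.sqrt (qf H v v).re) := by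
    rw [Real.sqrt_mul h2t, Real.sqrt_mul h2t]
    have hss : Real.sqrt (2 * τ) * Real.sqrt (2 * τ) = 2 * τ := Real.mul_self_sqrt h2t
    calc Real.sqrt (2 * τ) * Real.sqrt (qf H u u).re
          * (Real.sqrt (2 * τ) * Real.sqrt (qf H v v).re)
        = Real.sqrt (2 * τ) * Real.sqrt (2 * τ)
          * (Real.sqrt (qf H u u).re * Real.sqrt (qf H v v).re) := by ring
      _ = 2 * τ * (Real.sqrt (qf H u u).re * Real.sqrt (qf H v v).re) := by rw [hss]
  rw [hfin] at hcs2
  linarith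

lemma bilinear_bound {H K : Matrix (Fin N) (Fin N) ℂ} {τ : ℝ}
    (hH : H.PosDef) (hK : K.IsHermitian) (ht : 0 ≤ τ)
    (hP : ∀ x, 0 ≤ (qf ((τ : ℂ) • H + K) x x).re)
    (hQ : ∀ x, 0 ≤ (qf ((τ : ℂ) • H - K) x x).re) (u v : Fin N → ℂ) :
    ‖qf (H + Complex.I • K) u v‖
      ≤ Real.sqrt (1 + τ ^ 2) * (Real.sqrt (qf H u u).re * Real.sqrt (qf H v v).re) := by
  have hHnn : ∀ x, 0 ≤ (qf H x x).re := by
    intro x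
    have := hH.posSemidef.re_dotProduct_nonneg x
    simpa [qf] using this
  have hdet : IsUnit H.det := by
    have h := hH.det_pos
    exact isUnit_iff_ne_zero.mpr (fun hc => by rw [hc] at h; simp at h)
  set z : Fin N → ℂ := (H⁻¹ * K).mulVec v with hz
  have hHz : H.mulVec z = K.mulVec v := by
    rw [hz, mulVec_mulVec, ← Matrix.mul_assoc, Matrix.mul_nonsing_inv _ hdet, Matrix.one_mul]
  set w : Fin N → ℂ := v + Complex.I • z with hw
  have hMv : (H + Complex.I • K).mulVec v = H.mulVec w := by
    rw [hw, mulVec_add, mulVec_smul, add_mulVec, smul_mulVec, hHz]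
  have hqfw : qf (H + Complex.I • K) u v = qf H u w := by
    unfold qf
    rw [hMv]
  have hKvv : qf H v z = qf K v v := by
    unfold qf
    rw [hHz]
  have hKzz : qf H z z = qf K z v := by
    unfold qf
    rw [hHz]
  have hr : qf H z v = qf H v z := by
    rw [qf_conj hH.isHermitian z v, hKvv, qf_self_re hK]
    exact Complex.conj_ofReal _
  have hIconj : (starRingEnd ℂ) Complex.I = -Complex.I := by simp
  have hexp : qf H w w = qf H v v + qf H z z := by
    rw [hw, qf_add_left, qf_add_right, qf_add_right, qf_smul_right, qf_smul_left, qf_smul_left,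
      qf_smul_right, hr, hIconj]
    ring_nf
    rw [Complex.I_sq]
    ring
  have hwwre : (qf H w w).re = (qf H v v).re + (qf H z z).re := by
    rw [hexp, Complex.add_re]
  have hzz : (qf H z z).re ≤ τ ^ 2 * (qf H v v).re := by
    have h1 : (qf H z z).re ≤ ‖qf K z v‖ := by
      rw [hKzz]
      exact Complex.re_le_norm _
    have h2 := k_bound hH.isHermitian hK ht hP hQ z v
    have h3 : (qf H z z).re
        ≤ τ * (Real.sqrt (qf H z z).re * Real.sqrt (qf H v v).re) := le_trans h1 h2
    have hX := Real.sq_sqrt (hHnn z)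
    have hY := Real.sq_sqrt (hHnn v)
    nlinarith [sq_nonneg (Real.sqrt (qf H z z).re - τ * Real.sqrt (qf H v v).re),
      Real.sqrt_nonneg (qf H z z).re, Real.sqrt_nonneg (qf H v v).re]
  have hwle : (qf H w w).re ≤ (1 + τ ^ 2) * (qf H v v).re := by
    rw [hwwre]
    nlinarith [hHnn v]
  have hsw : Real.sqrt (qf H w w).re ≤ Real.sqrt (1 + τ ^ 2) * Real.sqrt (qf H v v).re := by
    rw [← Real.sqrt_mul (by positivity)]
    exact Real.sqrt_le_sqrt hwle
  calc ‖qf (H + Complex.I • K) u v‖ = ‖qf H u w‖ := by rw [hqfw]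
    _ ≤ Real.sqrt (qf H u u).re * Real.sqrt (qf H w w).re := qf_cs hH.isHermitian hHnn u w
    _ ≤ Real.sqrt (qf H u u).re * (Real.sqrt (1 + τ ^ 2) * Real.sqrt (qf H v v).re) := by
        have := Real.sqrt_nonneg (qf H u u).re
        gcongr
    _ = Real.sqrt (1 + τ ^ 2) * (Real.sqrt (qf H u u).re * Real.sqrt (qf H v v).re) := by ring

lemma star_starU_mulVec (U : Matrix (Fin N) (Fin N) ℂ) (x : Fin N → ℂ) :
    star (star U *ᵥ x) = star x ᵥ* U := by
  rw [star_mulVec, star_eq_conjTranspose, conjTranspose_conjTranspose]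

lemma qf_spectral_decomp {M : Matrix (Fin N) (Fin N) ℂ} (hM : M.IsHermitian) (x : Fin N → ℂ) :
    ∃ y : Fin N → ℂ, (qf M x x).re = ∑ i, hM.eigenvalues i * Complex.normSq (y i) ∧
      (star x ⬝ᵥ x).re = ∑ i, Complex.normSq (y i) := by
  refine ⟨star (Matrix.IsHermitian.eigenvectorUnitary hM : Matrix (Fin N) (Fin N) ℂ) *ᵥ x, ?_, ?_⟩
  · have h1 : qf M x x
        = star (star (Matrix.IsHermitian.eigenvectorUnitary hM : Matrix (Fin N) (Fin N) ℂ) *ᵥ x)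
          ⬝ᵥ Matrix.diagonal (RCLike.ofReal ∘ hM.eigenvalues)
            *ᵥ (star (Matrix.IsHermitian.eigenvectorUnitary hM : Matrix (Fin N) (Fin N) ℂ) *ᵥ x) := by
      unfold qf
      conv_lhs => rw [hM.spectral_theorem, Unitary.conjStarAlgAut_apply]
      rw [← mulVec_mulVec, ← mulVec_mulVec, dotProduct_mulVec, star_starU_mulVec]
    rw [h1]
    set y := star (Matrix.IsHermitian.eigenvectorUnitary hM : Matrix (Fin N) (Fin N) ℂ) *ᵥ x with hy
    have h2 : star y ⬝ᵥ Matrix.diagonal (RCLike.ofReal ∘ hM.eigenvalues) *ᵥ y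
        = ∑ i, ((hM.eigenvalues i : ℂ) * (Complex.normSq (y i) : ℂ)) := by
      unfold dotProduct
      apply Finset.sum_congr rfl
      intro i _
      rw [mulVec_diagonal]
      have hstar : (star y) i = (starRingEnd ℂ) (y i) := rfl
      have hco : ((RCLike.ofReal ∘ hM.eigenvalues) i : ℂ) = ((hM.eigenvalues i : ℝ) : ℂ) := rfl
      rw [hstar, hco]
      rw [show (starRingEnd ℂ) (y i) * (((hM.eigenvalues i : ℝ) : ℂ) * y i)
          = ((hM.eigenvalues i : ℝ) : ℂ) * (y i * (starRingEnd ℂ) (y i)) from by ring]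
      rw [Complex.mul_conj]
    rw [h2, Complex.re_sum]
    apply Finset.sum_congr rfl
    intro i _
    rw [← Complex.ofReal_mul]
    exact Complex.ofReal_re _
  · set y := star (Matrix.IsHermitian.eigenvectorUnitary hM : Matrix (Fin N) (Fin N) ℂ) *ᵥ x with hy
    have h3 : star y ⬝ᵥ y = star x ⬝ᵥ x := by
      rw [hy, star_starU_mulVec, ← dotProduct_mulVec, mulVec_mulVec]
      have hUU : (Matrix.IsHermitian.eigenvectorUnitary hM : Matrix (Fin N) (Fin N) ℂ)
          * star (Matrix.IsHermitian.eigenvectorUnitary hM : Matrix (Fin N) (Fin N) ℂ) = 1 :=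
        (Matrix.mem_unitaryGroup_iff).mp (Matrix.IsHermitian.eigenvectorUnitary hM).2
      rw [hUU, one_mulVec]
    rw [← h3]
    unfold dotProduct
    rw [Complex.re_sum]
    apply Finset.sum_congr rfl
    intro i _
    have hstar : (star y) i * y i = (starRingEnd ℂ) (y i) * y i := rfl
    rw [hstar, mul_comm, Complex.mul_conj]
    exact Complex.ofReal_re _

lemma rayleigh_le {M : Matrix (Fin N) (Fin N) ℂ} (hM : M.IsHermitian) (x : Fin N → ℂ) :
    (qf M x x).re ≤ (⨆ i, hM.eigenvalues i) * (star x ⬝ᵥ x).re := by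
  obtain ⟨y, h1, h2⟩ := qf_spectral_decomp hM x
  rw [h1, h2, Finset.mul_sum]
  apply Finset.sum_le_sum
  intro i _
  have hle : hM.eigenvalues i ≤ ⨆ j, hM.eigenvalues j :=
    le_ciSup (Set.Finite.bddAbove (Set.finite_range _)) i
  exact mul_le_mul_of_nonneg_right hle (Complex.normSq_nonneg _)

lemma rayleigh_ge {M : Matrix (Fin N) (Fin N) ℂ} (hM : M.IsHermitian) (x : Fin N → ℂ) :
    (⨅ i, hM.eigenvalues i) * (star x ⬝ᵥ x).re ≤ (qf M x x).re := by
  obtain ⟨y, h1, h2⟩ := qf_spectral_decomp hM x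
  rw [h1, h2, Finset.mul_sum]
  apply Finset.sum_le_sum
  intro i _
  have hle : (⨅ j, hM.eigenvalues j) ≤ hM.eigenvalues i :=
    ciInf_le (Set.Finite.bddBelow (Set.finite_range _)) i
  exact mul_le_mul_of_nonneg_right hle (Complex.normSq_nonneg _)

section Elim

variable (M : Matrix (Fin N) (Fin N) ℂ)

/-- Elimination vectors: `elimVec M k j` is the vector `x` with `x - e_j` supported on
indices `< k` and `M x` vanishing on indices `< k`. -/
noncomputable def elimVec : ℕ → Fin N → (Fin N → ℂ)
  | 0, j => Pi.single j 1
  | k + 1, j =>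
    if hk : k < N then
      elimVec k j - ((M.mulVec (elimVec k j) ⟨k, hk⟩) / (M.mulVec (elimVec k ⟨k, hk⟩) ⟨k, hk⟩))
        • elimVec k ⟨k, hk⟩
    else elimVec k j

/-- The full invariant of the elimination recursion. -/
def ElimInv (k : ℕ) : Prop :=
  ∀ j : Fin N, k ≤ (j : ℕ) →
    (elimVec M k j j = 1) ∧
    (∀ m : Fin N, m ≠ j → k ≤ (m : ℕ) → elimVec M k j m = 0) ∧
    (∀ m : Fin N, (m : ℕ) < k → M.mulVec (elimVec M k j) m = 0) ∧
    (∀ i : Fin N, k ≤ (i : ℕ) → elimIter M k i j = M.mulVec (elimVec M k j) i)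

lemma elimVec_zero (j : Fin N) : elimVec M 0 j = Pi.single j 1 := rfl

lemma elimVec_succ (k : ℕ) (j : Fin N) : elimVec M (k + 1) j =
    if hk : k < N then
      elimVec M k j - ((M.mulVec (elimVec M k j) ⟨k, hk⟩)
        / (M.mulVec (elimVec M k ⟨k, hk⟩) ⟨k, hk⟩)) • elimVec M k ⟨k, hk⟩
    else elimVec M k j := rfl

lemma elimIter_succ (k : ℕ) (A : Matrix (Fin N) (Fin N) ℂ) : elimIter A (k + 1) =
    if h : k < N then elimStep ⟨k, h⟩ (elimIter A k) else elimIter A k := rfl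

lemma elimInv (hacc : ∀ x : Fin N → ℂ, x ≠ 0 → 0 < (qf M x x).re) (k : ℕ) : ElimInv M k := by
  induction k with
  | zero =>
    intro j _
    refine ⟨Pi.single_eq_same j 1, fun m hm _ => Pi.single_eq_of_ne hm 1,
      fun m hm => absurd hm (Nat.not_lt_zero _), fun i _ => ?_⟩
    show M i j = _
    rw [elimVec_zero, mulVec_single]
    simp
  | succ k IH =>
    by_cases hk : k < N
    · set kf : Fin N := ⟨k, hk⟩ with hkf
      obtain ⟨hk1, hk2, hk3, hk4⟩ := IH kf (le_refl _)
      set xk := elimVec M k kf with hxk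
      set p := M.mulVec xk kf with hp
      have hqp : qf M xk xk = p := by
        unfold qf dotProduct
        rw [Finset.sum_eq_single kf]
        · rw [show (star xk) kf = (starRingEnd ℂ) (xk kf) from rfl, hk1]
          simp [hp]
        · intro m _ hm
          rcases lt_or_ge (m : ℕ) k with hmk | hmk
          · rw [hk3 m hmk, mul_zero]
          · rw [show (star xk) m = (starRingEnd ℂ) (xk m) from rfl, hk2 m hm hmk]
            simp
        · intro hmem
          exact absurd (Finset.mem_univ kf) hmem
      have hxk0 : xk ≠ 0 := by
        intro h0
        rw [h0] at hk1
        simp at hk1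
      have hpne : p ≠ 0 := by
        intro h0
        have := hacc xk hxk0
        rw [hqp, h0] at this
        simp at this
      intro j hj
      have hjk : k ≤ (j : ℕ) := Nat.le_of_succ_le hj
      have hjne : j ≠ kf := by
        intro h
        rw [h] at hj
        simp only [hkf] at hj
        omega
      obtain ⟨hj1, hj2, hj3, hj4⟩ := IH j hjk
      set xj := elimVec M k j with hxj
      set cj : ℂ := (M.mulVec xj kf) / p with hcj
      have hnew : elimVec M (k + 1) j = xj - cj • xk := by
        rw [elimVec_succ, dif_pos hk]
      have hxkj : xk j = 0 := hk2 j hjne hjk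
      have hmv : M.mulVec (elimVec M (k + 1) j) = M.mulVec xj - cj • M.mulVec xk := by
        rw [hnew, mulVec_sub, mulVec_smul]
      refine ⟨?_, ?_, ?_, ?_⟩
      · rw [hnew, Pi.sub_apply, Pi.smul_apply, hj1, hxkj, smul_zero, sub_zero]
      · intro m hm hmk1
        have hmk : k ≤ (m : ℕ) := Nat.le_of_succ_le hmk1
        have hmne : m ≠ kf := by
          intro h
          rw [h] at hmk1
          simp only [hkf] at hmk1
          omega
        rw [hnew, Pi.sub_apply, Pi.smul_apply, hj2 m hm hmk, hk2 m hmne hmk, smul_zero, sub_zero]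
      · intro m hmk1
        rw [hmv, Pi.sub_apply, Pi.smul_apply]
        rcases lt_or_ge (m : ℕ) k with hmk | hmk
        · rw [hj3 m hmk, hk3 m hmk, smul_zero, sub_zero]
        · have hmeq : m = kf := by
            apply Fin.ext
            have := Nat.lt_succ_iff.mp hmk1
            simp only [hkf]
            omega
          rw [hmeq, ← hp, hcj, smul_eq_mul, div_mul_cancel₀ _ hpne, sub_self]
      · intro i hik1
        have hik : k ≤ (i : ℕ) := Nat.le_of_succ_le hik1
        have hci : kf < i := by
          rw [Fin.lt_def]
          exact hik1
        have hcj' : kf < j := by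
          rw [Fin.lt_def]
          exact hj
        rw [elimIter_succ, dif_pos hk]
        unfold elimStep
        rw [if_pos ⟨hci, hcj'⟩]
        rw [hj4 i hik, hj4 kf (le_refl _), hk4 i hik, hk4 kf (le_refl _)]
        rw [hmv, Pi.sub_apply, Pi.smul_apply, hcj, ← hp, smul_eq_mul]
        field_simp
    · intro j hj
      have : (j : ℕ) < N := j.isLt
      omega

lemma elimIter_freeze (A : Matrix (Fin N) (Fin N) ℂ) (i j : Fin N) (k : ℕ) :
    elimIter A k i j = elimIter A (min k (min (i : ℕ) (j : ℕ))) i j := by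
  induction k with
  | zero => rw [Nat.zero_min]
  | succ k IH =>
    by_cases hk : k < N
    · rw [elimIter_succ, dif_pos hk]
      by_cases hm : k < min (i : ℕ) (j : ℕ)
      · have h1 : min (k + 1) (min (i : ℕ) (j : ℕ)) = k + 1 := by omega
        rw [h1, elimIter_succ, dif_pos hk]
      · have hcond : ¬((⟨k, hk⟩ : Fin N) < i ∧ (⟨k, hk⟩ : Fin N) < j) := by
          rw [Fin.lt_def, Fin.lt_def]
          simp only []
          omega
        unfold elimStep
        rw [if_neg hcond, IH]
        have h2 : min k (min (i : ℕ) (j : ℕ)) = min (k + 1) (min (i : ℕ) (j : ℕ)) := by omega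
        rw [h2]
    · rw [elimIter_succ, dif_neg hk, IH]
      have hi := i.isLt
      have hj := j.isLt
      have h2 : min k (min (i : ℕ) (j : ℕ)) = min (k + 1) (min (i : ℕ) (j : ℕ)) := by omega
      rw [h2]

lemma elimStep_smul (z : ℂ) (kf : Fin N) (A : Matrix (Fin N) (Fin N) ℂ) :
    elimStep kf (z • A) = z • elimStep kf A := by
  funext i j
  rw [Matrix.smul_apply]
  unfold elimStep
  simp only [Matrix.smul_apply, Pi.smul_apply, smul_eq_mul]
  by_cases h : kf < i ∧ kf < j
  · rw [if_pos h, if_pos h]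
    rcases eq_or_ne z 0 with rfl | hz
    · simp
    · rcases eq_or_ne (A kf kf) 0 with h0 | h0
      · rw [h0]
        simp
      · rw [mul_inv]
        field_simp
  · rw [if_neg h, if_neg h]

lemma elimIter_smul (z : ℂ) (A : Matrix (Fin N) (Fin N) ℂ) (k : ℕ) :
    elimIter (z • A) k = z • elimIter A k := by
  induction k with
  | zero => rfl
  | succ k IH =>
    rw [elimIter_succ, elimIter_succ]
    by_cases hk : k < N
    · rw [dif_pos hk, dif_pos hk, IH, elimStep_smul]
    · rw [dif_neg hk, dif_neg hk, IH]

lemma star_single_one (i : Fin N) :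
    (star (Pi.single i (1 : ℂ)) : Fin N → ℂ) = Pi.single i (1 : ℂ) := by
  ext m
  simp [Pi.single_apply, apply_ite (star : ℂ → ℂ)]

lemma qf_single_left (M : Matrix (Fin N) (Fin N) ℂ) (i : Fin N) (v : Fin N → ℂ) :
    qf M (Pi.single i 1) v = M.mulVec v i := by
  unfold qf
  rw [star_single_one, single_dotProduct, one_mul]

/-- The master entry bound: every entry of `elimIter (H + iK) k` in the trailing block is
bounded by `(1 + τ²)·√(H_ii)·√(H_jj)`. -/
lemma master_bound {H K : Matrix (Fin N) (Fin N) ℂ} {τ : ℝ}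
    (hH : H.PosDef) (hK : K.IsHermitian) (ht : 0 ≤ τ)
    (hP : ∀ x, 0 ≤ (qf ((τ : ℂ) • H + K) x x).re)
    (hQ : ∀ x, 0 ≤ (qf ((τ : ℂ) • H - K) x x).re)
    (k : ℕ) (i j : Fin N) (hki : k ≤ (i : ℕ)) (hkj : k ≤ (j : ℕ)) :
    ‖elimIter (H + Complex.I • K) k i j‖
      ≤ (1 + τ ^ 2) * (Real.sqrt (qf H (Pi.single i 1) (Pi.single i 1)).re
        * Real.sqrt (qf H (Pi.single j 1) (Pi.single j 1)).re) := by
  set M := H + Complex.I • K with hM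
  have hHnn : ∀ x, 0 ≤ (qf H x x).re := by
    intro x
    have := hH.posSemidef.re_dotProduct_nonneg x
    simpa [qf] using this
  have hqfM : ∀ u v, qf M u v = qf H u v + Complex.I * qf K u v := by
    intro u v
    rw [hM, qf_matrix_add, qf_matrix_smul]
  have hreM : ∀ x, (qf M x x).re = (qf H x x).re := by
    intro x
    rw [hqfM]
    have hKr : (qf K x x).im = 0 := by
      rw [qf_self_re hK]
      simp
    simp [Complex.add_re, Complex.mul_re, hKr]
  have hacc : ∀ x : Fin N → ℂ, x ≠ 0 → 0 < (qf M x x).re := by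
    intro x hx
    rw [hreM]
    have := hH.re_dotProduct_pos hx
    simpa [qf] using this
  obtain ⟨h1, h2, h3, h4⟩ := elimInv M hacc k j hkj
  set x := elimVec M k j with hx
  have hs : elimIter M k i j = qf M (Pi.single i 1) x := by
    rw [qf_single_left]
    exact h4 i hki
  have hqxx : qf M x x = qf M (Pi.single j 1) x := by
    rw [qf_single_left]
    unfold qf dotProduct
    rw [Finset.sum_eq_single j]
    · rw [show (star x) j = (starRingEnd ℂ) (x j) from rfl, h1]
      simp
    · intro m _ hm
      rcases lt_or_ge (m : ℕ) k with hmk | hmk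
      · rw [h3 m hmk, mul_zero]
      · rw [show (star x) m = (starRingEnd ℂ) (x m) from rfl, h2 m hm hmk]
        simp
    · intro hmem
      exact absurd (Finset.mem_univ j) hmem
  -- ‖x‖_H ≤ √(1+τ²)·√(H_jj)
  set a := Real.sqrt (qf H x x).re with ha
  set Ej := Real.sqrt (qf H (Pi.single j 1) (Pi.single j 1)).re with hEj
  set Ei := Real.sqrt (qf H (Pi.single i 1) (Pi.single i 1)).re with hEi
  have hbil := bilinear_bound hH hK ht hP hQ (Pi.single j 1) x
  rw [← hM] at hbil
  have hre1 : (qf H x x).re ≤ ‖qf M (Pi.single j 1) x‖ := by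
    rw [← hreM, hqxx]
    exact Complex.re_le_norm _
  have haa : a * a ≤ Real.sqrt (1 + τ ^ 2) * (Ej * a) := by
    have hsq : a * a = (qf H x x).re := Real.mul_self_sqrt (hHnn x)
    rw [hsq]
    exact le_trans hre1 hbil
  have hale : a ≤ Real.sqrt (1 + τ ^ 2) * Ej := by
    rcases eq_or_lt_of_le (Real.sqrt_nonneg (qf H x x).re : (0 : ℝ) ≤ a) with h0 | h0
    · have h0' : a = 0 := by
        rw [ha]
        exact h0.symm
      rw [h0']
      exact mul_nonneg (Real.sqrt_nonneg _) (by rw [hEj]; exact Real.sqrt_nonneg _)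
    · nlinarith
  have hbil2 := bilinear_bound hH hK ht hP hQ (Pi.single i 1) x
  rw [← hM] at hbil2
  have hss : Real.sqrt (1 + τ ^ 2) * Real.sqrt (1 + τ ^ 2) = 1 + τ ^ 2 :=
    Real.mul_self_sqrt (by positivity)
  calc ‖elimIter M k i j‖ = ‖qf M (Pi.single i 1) x‖ := by rw [hs]
    _ ≤ Real.sqrt (1 + τ ^ 2) * (Ei * a) := hbil2
    _ ≤ Real.sqrt (1 + τ ^ 2) * (Ei * (Real.sqrt (1 + τ ^ 2) * Ej)) := by
        have hEi0 : 0 ≤ Ei := Real.sqrt_nonneg _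
        have h0 : (0:ℝ) ≤ Real.sqrt (1 + τ ^ 2) := Real.sqrt_nonneg _
        gcongr
    _ = (Real.sqrt (1 + τ ^ 2) * Real.sqrt (1 + τ ^ 2)) * (Ei * Ej) := by ring
    _ = (1 + τ ^ 2) * (Ei * Ej) := by rw [hss]

end Elim

lemma qf_single_single (H : Matrix (Fin N) (Fin N) ℂ) (i : Fin N) :
    qf H (Pi.single i 1) (Pi.single i 1) = H i i := by
  rw [qf_single_left, mulVec_single]
  simp

lemma dot_self_re_nonneg (x : Fin N → ℂ) : 0 ≤ (star x ⬝ᵥ x).re := by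
  unfold dotProduct
  rw [Complex.re_sum]
  apply Finset.sum_nonneg
  intro m _
  have : (star x) m * x m = ((Complex.normSq (x m) : ℝ) : ℂ) := by
    rw [show (star x) m = (starRingEnd ℂ) (x m) from rfl, mul_comm, Complex.mul_conj]
  rw [this, Complex.ofReal_re]
  exact Complex.normSq_nonneg _

set_option maxHeartbeats 1000000 in
/-- Existence of a rotation `(c, s)` putting the rectangle `[β1,β2] × [γ1,γ2]` inside a sector
of half-angle `arctan t`. -/
lemma sector_exists {β1 β2 γ1 γ2 κ t : ℝ} (hβ1 : 0 < β1) (hγ1 : 0 < γ1)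
    (hβ12 : β1 ≤ β2) (hγ12 : γ1 ≤ γ2) (hβκ : β2 ≤ κ * β1) (hγκ : γ2 ≤ κ * γ1) (hκ1 : 1 ≤ κ)
    (ht : t = (κ - 1) / (κ + 1)) :
    ∃ c s : ℝ, 0 < c ∧ 0 ≤ s ∧
      0 ≤ (t * c + s) * β1 + (t * s - c) * γ2 ∧ 0 ≤ (t * c - s) * β2 + (t * s + c) * γ1 := by
  have hκ0 : (0 : ℝ) < κ + 1 := by linarith
  have ht0 : 0 ≤ t := by
    rw [ht]
    apply div_nonneg <;> linarith
  by_cases hcase : γ2 ≤ t * β1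
  · refine ⟨1, 0, one_pos, le_refl 0, by nlinarith, ?_⟩
    have hβ2 : 0 ≤ β2 := by linarith
    nlinarith [mul_nonneg ht0 hβ2]
  · push_neg at hcase
    have hκpos : (0 : ℝ) < κ := by linarith
    have hκ2 : 0 ≤ κ ^ 2 - 1 := by nlinarith
    refine ⟨β1 + t * γ2, γ2 - t * β1, by nlinarith, by linarith, ?_, ?_⟩
    · have hz : (t * (β1 + t * γ2) + (γ2 - t * β1)) * β1
          + (t * (γ2 - t * β1) - (β1 + t * γ2)) * γ2 = 0 := by ring
      linarith
    · have hβ2pos : 0 < β2 := lt_of_lt_of_le hβ1 hβ12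
      have hγ2pos : 0 < γ2 := lt_of_lt_of_le hγ1 hγ12
      set w := Real.sqrt ((β1 * β2) * (γ1 * γ2)) with hw
      have hXnn : 0 ≤ (β1 * β2) * (γ1 * γ2) :=
        mul_nonneg (mul_nonneg hβ1.le hβ2pos.le) (mul_nonneg hγ1.le hγ2pos.le)
      have hw0 : 0 ≤ w := Real.sqrt_nonneg _
      have hw2 : w ^ 2 = (β1 * β2) * (γ1 * γ2) := Real.sq_sqrt hXnn
      have hβγnn : 0 < β2 * γ2 := mul_pos hβ2pos hγ2pos
      have hbg : β2 * γ2 ≤ κ ^ 2 * (β1 * γ1) := by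
        have h := mul_le_mul hβκ hγκ hγ2pos.le (mul_nonneg hκpos.le hβ1.le)
        nlinarith [h]
      have hw5 : w ≤ κ * (β1 * γ1) := by
        have hb : β1 * β2 ≤ κ * (β1 * β1) := by
          nlinarith [mul_le_mul_of_nonneg_left hβκ hβ1.le]
        have hg : γ1 * γ2 ≤ κ * (γ1 * γ1) := by
          nlinarith [mul_le_mul_of_nonneg_left hγκ hγ1.le]
        have h1 : (β1 * β2) * (γ1 * γ2) ≤ (κ * (β1 * γ1)) ^ 2 := by
          have h := mul_le_mul hb hg (mul_nonneg hγ1.le hγ2pos.le)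
            (mul_nonneg hκpos.le (mul_nonneg hβ1.le hβ1.le))
          nlinarith [h]
        calc w ≤ Real.sqrt ((κ * (β1 * γ1)) ^ 2) := Real.sqrt_le_sqrt h1
          _ = κ * (β1 * γ1) :=
            Real.sqrt_sq (mul_nonneg hκpos.le (mul_nonneg hβ1.le hγ1.le))
      have hw3 : β2 * γ2 ≤ κ * w := by
        have h2a := mul_le_mul_of_nonneg_right hbg hβγnn.le
        have h2 : (β2 * γ2) ^ 2 ≤ (κ * w) ^ 2 := by nlinarith [h2a, hw2]
        have hsum : 0 < β2 * γ2 + κ * w := by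
          have := mul_nonneg hκpos.le hw0
          linarith
        nlinarith [h2, hsum]
      have hw4 : 2 * w ≤ β1 * β2 + γ1 * γ2 := by
        rw [hw, Real.sqrt_mul (mul_nonneg hβ1.le hβ2pos.le)]
        nlinarith [two_mul_le_add_sq (Real.sqrt (β1 * β2)) (Real.sqrt (γ1 * γ2)),
          Real.sq_sqrt (mul_nonneg hβ1.le hβ2pos.le),
          Real.sq_sqrt (mul_nonneg hγ1.le hγ2pos.le)]
      have hkey : 2 * κ * (β2 * γ2 - β1 * γ1) ≤ (κ ^ 2 - 1) * (β1 * β2 + γ1 * γ2) := by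
        have hs1 := mul_le_mul_of_nonneg_left hw3 (by linarith : (0:ℝ) ≤ 2 * κ)
        have hs2 := mul_le_mul_of_nonneg_right hw4 hκ2
        nlinarith [hs1, hs2, hw5, hκpos]
      have htmul : t * (κ + 1) = κ - 1 := by
        rw [ht]
        field_simp
      have hexp : ((t * (β1 + t * γ2) - (γ2 - t * β1)) * β2
            + (t * (γ2 - t * β1) + (β1 + t * γ2)) * γ1) * (κ + 1) ^ 2
          = 2 * (κ ^ 2 - 1) * (β1 * β2 + γ1 * γ2) - 4 * κ * (β2 * γ2 - β1 * γ1) := by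
        linear_combination (2 * (β1 * β2 + γ1 * γ2) * (κ + 1) + (β2 * γ2 - β1 * γ1)
          * (t * (κ + 1) + (κ - 1))) * htmul
      have hR : 0 ≤ ((t * (β1 + t * γ2) - (γ2 - t * β1)) * β2
          + (t * (γ2 - t * β1) + (β1 + t * γ2)) * γ1) * (κ + 1) ^ 2 := by
        rw [hexp]
        linarith
      have hsq : (0 : ℝ) < (κ + 1) ^ 2 := by positivity
      nlinarith [hR, hsq]

end GHWork

set_option maxHeartbeats 2000000

/-- For a generalized Higham matrix `A = B + iC` with `κ = max {κ(B), κ(C)}`,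
the growth factor satisfies `4κ/(1+κ)² ≤ ρ_n(A) ≤ 2(1+κ²)/(1+κ)² ≤ 2`. -/
theorem growth_factor_generalized_higham {n : ℕ}
    (A B C : Matrix (Fin (n + 1)) (Fin (n + 1)) ℂ)
    (hB : B.PosDef) (hC : C.PosDef)
    (hA : A = B + Complex.I • C)
    (κ : ℝ) (hκ : κ = max (condNum hB.isHermitian) (condNum hC.isHermitian)) :
    4 * κ / (1 + κ) ^ 2 ≤ growthFactor A ∧
      growthFactor A ≤ 2 * (1 + κ ^ 2) / (1 + κ) ^ 2 ∧
      2 * (1 + κ ^ 2) / (1 + κ) ^ 2 ≤ 2 := by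
  classical
  open GHWork in
  set β1 := ⨅ i, hB.isHermitian.eigenvalues i with hβ1def
  set β2 := ⨆ i, hB.isHermitian.eigenvalues i with hβ2def
  set γ1 := ⨅ i, hC.isHermitian.eigenvalues i with hγ1def
  set γ2 := ⨆ i, hC.isHermitian.eigenvalues i with hγ2def
  have hβ1pos : 0 < β1 := by
    obtain ⟨i0, hi0⟩ := exists_eq_ciInf_of_finite (f := hB.isHermitian.eigenvalues)
    rw [hβ1def, ← hi0]
    exact hB.eigenvalues_pos i0
  have hγ1pos : 0 < γ1 := by
    obtain ⟨i0, hi0⟩ := exists_eq_ciInf_of_finite (f := hC.isHermitian.eigenvalues)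
    rw [hγ1def, ← hi0]
    exact hC.eigenvalues_pos i0
  have hβ12 : β1 ≤ β2 :=
    le_trans (ciInf_le (Set.Finite.bddBelow (Set.finite_range _)) (0 : Fin (n + 1)))
      (le_ciSup (Set.Finite.bddAbove (Set.finite_range _)) (0 : Fin (n + 1)))
  have hγ12 : γ1 ≤ γ2 :=
    le_trans (ciInf_le (Set.Finite.bddBelow (Set.finite_range _)) (0 : Fin (n + 1)))
      (le_ciSup (Set.Finite.bddAbove (Set.finite_range _)) (0 : Fin (n + 1)))
  have hκB : β2 / β1 ≤ κ := by
    rw [hκ]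
    exact le_max_left _ _
  have hκC : γ2 / γ1 ≤ κ := by
    rw [hκ]
    exact le_max_right _ _
  have hβ2κ : β2 ≤ κ * β1 := (div_le_iff₀ hβ1pos).mp hκB
  have hγ2κ : γ2 ≤ κ * γ1 := (div_le_iff₀ hγ1pos).mp hκC
  have hκ1 : 1 ≤ κ := le_trans ((le_div_iff₀ hβ1pos).mpr (by linarith)) hκB
  have hκpos : (0 : ℝ) < κ := lt_of_lt_of_le one_pos hκ1
  set t := (κ - 1) / (κ + 1) with htdef
  have ht0 : 0 ≤ t := div_nonneg (by linarith) (by linarith)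
  obtain ⟨c, s, hc0, hs0, cond1, cond2⟩ :=
    sector_exists hβ1pos hγ1pos hβ12 hγ12 hβ2κ hγ2κ hκ1 htdef
  set H : Matrix (Fin (n + 1)) (Fin (n + 1)) ℂ := (c : ℂ) • B + (s : ℂ) • C with hHdef
  set K : Matrix (Fin (n + 1)) (Fin (n + 1)) ℂ := (c : ℂ) • C - (s : ℂ) • B with hKdef
  set z : ℂ := (c : ℂ) - Complex.I * (s : ℂ) with hzdef
  have hMz : H + Complex.I • K = z • A := by
    rw [hA, hHdef, hKdef, hzdef]
    ext i j
    simp only [Matrix.add_apply, Matrix.sub_apply, Matrix.smul_apply, smul_eq_mul]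
    linear_combination ((s : ℂ) * C i j) * Complex.I_sq
  have hzre : z.re = c := by
    rw [hzdef]
    simp [Complex.sub_re, Complex.mul_re]
  have hzne : z ≠ 0 := by
    intro h
    rw [h] at hzre
    simp at hzre
    linarith
  have habsz : 0 < ‖z‖ := norm_pos_iff.mpr hzne
  have hBH := hB.isHermitian
  have hCH := hC.isHermitian
  have hHherm : H.IsHermitian := by
    show Hᴴ = H
    rw [hHdef, conjTranspose_add, conjTranspose_smul, conjTranspose_smul, hBH.eq, hCH.eq]
    simp [Complex.star_def, Complex.conj_ofReal]
  have hKherm : K.IsHermitian := by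
    show Kᴴ = K
    rw [hKdef, conjTranspose_sub, conjTranspose_smul, conjTranspose_smul, hBH.eq, hCH.eq]
    simp [Complex.star_def, Complex.conj_ofReal]
  have hBnn : ∀ x : Fin (n + 1) → ℂ, 0 ≤ (qf B x x).re := by
    intro x
    have := hB.posSemidef.re_dotProduct_nonneg x
    simpa [qf] using this
  have hCnn : ∀ x : Fin (n + 1) → ℂ, 0 ≤ (qf C x x).re := by
    intro x
    have := hC.posSemidef.re_dotProduct_nonneg x
    simpa [qf] using this
  have hqfH : ∀ x : Fin (n + 1) → ℂ,
      (qf H x x).re = c * (qf B x x).re + s * (qf C x x).re := by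
    intro x
    rw [hHdef, qf_matrix_add, qf_matrix_smul, qf_matrix_smul]
    simp [Complex.add_re, Complex.mul_re, Complex.ofReal_re, Complex.ofReal_im]
  have hqfK : ∀ x : Fin (n + 1) → ℂ,
      (qf K x x).re = c * (qf C x x).re - s * (qf B x x).re := by
    intro x
    rw [hKdef, qf_matrix_sub, qf_matrix_smul, qf_matrix_smul]
    simp [Complex.sub_re, Complex.mul_re, Complex.ofReal_re, Complex.ofReal_im]
  have hHpd : H.PosDef := by
    refine PosDef.of_dotProduct_mulVec_pos hHherm (fun x hx => ?_)
    have hre : 0 < (qf H x x).re := by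
      rw [hqfH]
      have h1 : 0 < (qf B x x).re := by
        have := hB.re_dotProduct_pos hx
        simpa [qf] using this
      have h2 : 0 ≤ (qf C x x).re := hCnn x
      nlinarith [mul_nonneg hs0 h2]
    have him : (qf H x x).im = 0 := by
      have := congrArg Complex.im (qf_self_re hHherm x)
      simpa using this
    show 0 < star x ⬝ᵥ H *ᵥ x
    rw [show star x ⬝ᵥ H *ᵥ x = qf H x x from rfl, Complex.lt_def]
    constructor
    · simpa using hre
    · simp [him]
  -- Rayleigh bounds
  have hrB1 : ∀ x : Fin (n + 1) → ℂ, β1 * (star x ⬝ᵥ x).re ≤ (qf B x x).re :=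
    fun x => rayleigh_ge hBH x
  have hrB2 : ∀ x : Fin (n + 1) → ℂ, (qf B x x).re ≤ β2 * (star x ⬝ᵥ x).re :=
    fun x => rayleigh_le hBH x
  have hrC1 : ∀ x : Fin (n + 1) → ℂ, γ1 * (star x ⬝ᵥ x).re ≤ (qf C x x).re :=
    fun x => rayleigh_ge hCH x
  have hrC2 : ∀ x : Fin (n + 1) → ℂ, (qf C x x).re ≤ γ2 * (star x ⬝ᵥ x).re :=
    fun x => rayleigh_le hCH x
  -- PSD of τH ± K
  have hP : ∀ x, 0 ≤ (qf ((t : ℂ) • H + K) x x).re := by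
    intro x
    have hd : (qf ((t : ℂ) • H + K) x x).re
        = (t * c - s) * (qf B x x).re + (t * s + c) * (qf C x x).re := by
      rw [qf_matrix_add, qf_matrix_smul]
      rw [Complex.add_re, Complex.mul_re]
      rw [Complex.ofReal_re, Complex.ofReal_im]
      rw [hqfH x, hqfK x]
      ring
    rw [hd]
    have hn2 : 0 ≤ (star x ⬝ᵥ x).re := dot_self_re_nonneg x
    have hcpos : 0 ≤ t * s + c := by nlinarith [mul_nonneg ht0 hs0]
    rcases le_or_gt 0 (t * c - s) with hco | hco
    · nlinarith [mul_nonneg hco (hBnn x), mul_nonneg hcpos (hCnn x)]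
    · have hA1 : (t * c - s) * (β2 * (star x ⬝ᵥ x).re) ≤ (t * c - s) * (qf B x x).re :=
        mul_le_mul_of_nonpos_left (hrB2 x) hco.le
      have hA2 : (t * s + c) * (γ1 * (star x ⬝ᵥ x).re) ≤ (t * s + c) * (qf C x x).re :=
        mul_le_mul_of_nonneg_left (hrC1 x) hcpos
      have hA3 : 0 ≤ ((t * c - s) * β2 + (t * s + c) * γ1) * (star x ⬝ᵥ x).re :=
        mul_nonneg cond2 hn2
      nlinarith [hA1, hA2, hA3]
  have hQ : ∀ x, 0 ≤ (qf ((t : ℂ) • H - K) x x).re := by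
    intro x
    have hd : (qf ((t : ℂ) • H - K) x x).re
        = (t * c + s) * (qf B x x).re + (t * s - c) * (qf C x x).re := by
      rw [qf_matrix_sub, qf_matrix_smul]
      rw [Complex.sub_re, Complex.mul_re]
      rw [Complex.ofReal_re, Complex.ofReal_im]
      rw [hqfH x, hqfK x]
      ring
    rw [hd]
    have hn2 : 0 ≤ (star x ⬝ᵥ x).re := dot_self_re_nonneg x
    have hcpos : 0 ≤ t * c + s := by nlinarith [mul_nonneg ht0 hc0.le]
    rcases le_or_gt 0 (t * s - c) with hco | hco
    · nlinarith [mul_nonneg hcpos (hBnn x), mul_nonneg hco (hCnn x)]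
    · have hA1 : (t * c + s) * (β1 * (star x ⬝ᵥ x).re) ≤ (t * c + s) * (qf B x x).re :=
        mul_le_mul_of_nonneg_left (hrB1 x) hcpos
      have hA2 : (t * s - c) * (γ2 * (star x ⬝ᵥ x).re) ≤ (t * s - c) * (qf C x x).re :=
        mul_le_mul_of_nonpos_left (hrC2 x) hco.le
      have hA3 : 0 ≤ ((t * c + s) * β1 + (t * s - c) * γ2) * (star x ⬝ᵥ x).re :=
        mul_nonneg cond1 hn2
      nlinarith [hA1, hA2, hA3]
  -- diagonal bounds
  have hKdiag : ∀ i : Fin (n + 1), (K i i).im = 0 := by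
    intro i
    have h2 : (starRingEnd ℂ) (K i i) = K i i := by
      calc (starRingEnd ℂ) (K i i) = Kᴴ i i := (Matrix.conjTranspose_apply K i i).symm
        _ = K i i := by rw [hKherm.eq]
    exact Complex.conj_eq_iff_im.mp h2
  have hHiire : ∀ i : Fin (n + 1), (H i i).re ≤ ‖z‖ * ‖A i i‖ := by
    intro i
    have h1 : ((H + Complex.I • K) i i).re = (H i i).re := by
      simp [Matrix.add_apply, Matrix.smul_apply, Complex.add_re, Complex.mul_re, hKdiag i,
        smul_eq_mul]
    calc (H i i).re ≤ ‖(H + Complex.I • K) i i‖ := by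
          rw [← h1]
          exact Complex.re_le_norm _
      _ = ‖z * A i i‖ := by
          rw [hMz]
          simp [Matrix.smul_apply, smul_eq_mul]
      _ = ‖z‖ * ‖A i i‖ := norm_mul _ _
  set D := (Finset.univ.sup' Finset.univ_nonempty
    fun p : Fin (n + 1) × Fin (n + 1) => ‖A p.1 p.2‖) with hDdef
  have hDle : ∀ p q : Fin (n + 1), ‖A p q‖ ≤ D := by
    intro p q
    exact Finset.le_sup'
      (f := fun p : Fin (n + 1) × Fin (n + 1) => ‖A p.1 p.2‖)
      (Finset.mem_univ (p, q))
  have hHiiD : ∀ i : Fin (n + 1), (H i i).re ≤ ‖z‖ * D := by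
    intro i
    refine le_trans (hHiire i) ?_
    exact mul_le_mul_of_nonneg_left (hDle i i) (norm_nonneg z)
  have hD0 : 0 < D := by
    have hs0' : (Pi.single (0 : Fin (n + 1)) 1 : Fin (n + 1) → ℂ) ≠ 0 := by
      intro h
      have := congrFun h 0
      simp at this
    have h00 : 0 < (H 0 0).re := by
      have h := hHpd.re_dotProduct_pos hs0'
      have h' : 0 < (qf H (Pi.single 0 1) (Pi.single 0 1)).re := by simpa [qf] using h
      rwa [qf_single_single] at h'
    nlinarith [hHiiD 0, habsz, h00]
  -- per-entry bound
  have hentry : ∀ (k : ℕ) (i j : Fin (n + 1)),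
      ‖elimIter A k i j‖ ≤ (1 + t ^ 2) * D := by
    intro k i j
    set k' := min k (min (i : ℕ) (j : ℕ)) with hk'
    have hfr := elimIter_freeze A i j k
    have hki : k' ≤ (i : ℕ) := by omega
    have hkj : k' ≤ (j : ℕ) := by omega
    have hmb := master_bound hHpd hKherm ht0 hP hQ k' i j hki hkj
    rw [hMz, elimIter_smul] at hmb
    have hsm : ‖(z • elimIter A k') i j‖
        = ‖z‖ * ‖elimIter A k' i j‖ := by
      simp [Matrix.smul_apply, smul_eq_mul]
    rw [hsm] at hmb
    have hE : Real.sqrt (qf H (Pi.single i 1) (Pi.single i 1)).re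
        * Real.sqrt (qf H (Pi.single j 1) (Pi.single j 1)).re ≤ ‖z‖ * D := by
      rw [qf_single_single, qf_single_single]
      have h1 : Real.sqrt (H i i).re ≤ Real.sqrt (‖z‖ * D) :=
        Real.sqrt_le_sqrt (hHiiD i)
      have h2 : Real.sqrt (H j j).re ≤ Real.sqrt (‖z‖ * D) :=
        Real.sqrt_le_sqrt (hHiiD j)
      calc Real.sqrt (H i i).re * Real.sqrt (H j j).re
          ≤ Real.sqrt (‖z‖ * D) * Real.sqrt (‖z‖ * D) :=
            mul_le_mul h1 h2 (Real.sqrt_nonneg _) (Real.sqrt_nonneg _)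
        _ = ‖z‖ * D := Real.mul_self_sqrt (by positivity)
    rw [hfr, ← hk']
    have hch : ‖z‖ * ‖elimIter A k' i j‖
        ≤ ‖z‖ * ((1 + t ^ 2) * D) := by
      calc ‖z‖ * ‖elimIter A k' i j‖
          ≤ (1 + t ^ 2) * (Real.sqrt (qf H (Pi.single i 1) (Pi.single i 1)).re
            * Real.sqrt (qf H (Pi.single j 1) (Pi.single j 1)).re) := hmb
        _ ≤ (1 + t ^ 2) * (‖z‖ * D) := by
            apply mul_le_mul_of_nonneg_left hE
            positivity
        _ = ‖z‖ * ((1 + t ^ 2) * D) := by ring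
    exact (mul_le_mul_iff_of_pos_left habsz).mp hch
  -- assemble
  have hgf : growthFactor A = (((Finset.range (n + 1)).product
      ((Finset.univ : Finset (Fin (n + 1))).product Finset.univ)).sup'
      (Finset.Nonempty.product ⟨0, by simp⟩
        (Finset.Nonempty.product Finset.univ_nonempty Finset.univ_nonempty))
      fun p => ‖elimIter A p.1 p.2.1 p.2.2‖) / D := rfl
  set Num := (((Finset.range (n + 1)).product
      ((Finset.univ : Finset (Fin (n + 1))).product Finset.univ)).sup'
      (Finset.Nonempty.product ⟨0, by simp⟩
        (Finset.Nonempty.product Finset.univ_nonempty Finset.univ_nonempty))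
      fun p => ‖elimIter A p.1 p.2.1 p.2.2‖) with hNumdef
  have hNumle : Num ≤ (1 + t ^ 2) * D := by
    rw [hNumdef]
    apply Finset.sup'_le
    intro p _
    exact hentry p.1 p.2.1 p.2.2
  have hDNum : D ≤ Num := by
    rw [hDdef]
    apply Finset.sup'_le
    intro p _
    have hmem : ((0 : ℕ), p) ∈ (Finset.range (n + 1)).product
        ((Finset.univ : Finset (Fin (n + 1))).product Finset.univ) := by
      exact Finset.mk_mem_product (by simp)
        (Finset.mk_mem_product (Finset.mem_univ _) (Finset.mem_univ _))
    have := Finset.le_sup'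
      (f := fun q : ℕ × (Fin (n + 1) × Fin (n + 1)) =>
        ‖elimIter A q.1 q.2.1 q.2.2‖) hmem
    simpa [hNumdef, elimIter.eq_1] using this
  have hsq : (0 : ℝ) < (1 + κ) ^ 2 := by nlinarith
  refine ⟨?_, ?_, ?_⟩
  · have h1 : 4 * κ / (1 + κ) ^ 2 ≤ 1 := by
      rw [div_le_one hsq]
      nlinarith [sq_nonneg (κ - 1)]
    have h2 : 1 ≤ Num / D := (one_le_div hD0).mpr hDNum
    rw [hgf]
    linarith
  · rw [hgf]
    have h2 : Num / D ≤ 1 + t ^ 2 := (div_le_iff₀ hD0).mpr hNumle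
    have h3 : 1 + t ^ 2 = 2 * (1 + κ ^ 2) / (1 + κ) ^ 2 := by
      rw [htdef]
      field_simp
      ring
    rw [← h3]
    exact h2
  · rw [div_le_iff₀ hsq]
    nlinarith [hκ1]
end

section
/- For a complex symmetric positive definite matrix A, the growth factor in Gaussian elimination without pivoting simplifies to ρ_n(A) = max_{j,k}|a_{jj}^{(k)}| / max_j |a_{jj}|; that is, the maxima in the definition of ρ_n(A) are attained on diagonal entries. -/
open Matrix Complex Finset

/-- A complex matrix is CSPD (a Higham matrix) if it is `B + iC` with `B`, `C`
real symmetric positive definite. -/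
def IsCSPD {m : Type*} [Fintype m] [DecidableEq m] (A : Matrix m m ℂ) : Prop :=
  ∃ B C : Matrix m m ℝ, B.IsSymm ∧ B.PosDef ∧ C.IsSymm ∧ C.PosDef ∧
    A = B.map (fun x => (x : ℂ)) + Complex.I • C.map (fun x => (x : ℂ))

lemma posdef_quad {N : ℕ} {D : Matrix (Fin N) (Fin N) ℝ} (hD : D.PosDef)
    (w : Fin N → ℝ) (hw : w ≠ 0) : 0 < ∑ i, ∑ j, D i j * w i * w j := by
  have := hD.dotProduct_mulVec_pos hw
  simpa [dotProduct, mulVec, Finset.mul_sum, mul_comm, mul_assoc, mul_left_comm] using this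

lemma possemidef_quad {N : ℕ} {D : Matrix (Fin N) (Fin N) ℝ} (hD : D.PosDef)
    (w : Fin N → ℝ) : 0 ≤ ∑ i, ∑ j, D i j * w i * w j := by
  have := hD.posSemidef.dotProduct_mulVec_nonneg w
  simpa [dotProduct, mulVec, Finset.mul_sum, mul_comm, mul_assoc, mul_left_comm] using this

lemma sum_swap_symm {N : ℕ} {D : Matrix (Fin N) (Fin N) ℝ} (hD : D.IsSymm) (u v : Fin N → ℝ) :
    ∑ i, ∑ j, D i j * u i * v j = ∑ i, ∑ j, D i j * v i * u j := by
  rw [Finset.sum_comm]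
  refine Finset.sum_congr rfl fun i _ => Finset.sum_congr rfl fun j _ => ?_
  rw [hD.apply]; ring

noncomputable def quadF {N : ℕ} (M : Matrix (Fin N) (Fin N) ℂ) (x : Fin N → ℂ) : ℂ :=
  ∑ i, ∑ j, (starRingEnd ℂ) (x i) * M i j * x j

def ActiveCSPD {N : ℕ} (k : ℕ) (M : Matrix (Fin N) (Fin N) ℂ) : Prop :=
  (∀ i j : Fin N, k ≤ (i : ℕ) → k ≤ (j : ℕ) → M i j = M j i) ∧
  ∀ x : Fin N → ℂ, (∀ i : Fin N, (i : ℕ) < k → x i = 0) → x ≠ 0 →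
    0 < (quadF M x).re ∧ 0 < (quadF M x).im

lemma base_active {N : ℕ} {A : Matrix (Fin N) (Fin N) ℂ} (hA : IsCSPD A) :
    ActiveCSPD 0 A := by
  obtain ⟨B, C, hBs, hBp, hCs, hCp, rfl⟩ := hA
  constructor
  · intro i j _ _
    simp [Matrix.add_apply, Matrix.smul_apply, Matrix.map_apply, hBs.apply, hCs.apply]
  · intro x _ hx
    set u : Fin N → ℝ := fun i => (x i).re with hu
    set v : Fin N → ℝ := fun i => (x i).im with hv
    have hre : (quadF (B.map (fun x => (x : ℂ)) + Complex.I • C.map (fun x => (x : ℂ))) x).re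
        = (∑ i, ∑ j, B i j * u i * u j) + (∑ i, ∑ j, B i j * v i * v j)
          + ((∑ i, ∑ j, C i j * v i * u j) - (∑ i, ∑ j, C i j * u i * v j)) := by
      have : (quadF (B.map (fun x => (x : ℂ)) + Complex.I • C.map (fun x => (x : ℂ))) x).re
          = ∑ i, ∑ j, (B i j * u i * u j + B i j * v i * v j
              + (C i j * v i * u j - C i j * u i * v j)) := by
        rw [quadF, Complex.re_sum]
        refine Finset.sum_congr rfl fun i _ => ?_
        rw [Complex.re_sum]
        refine Finset.sum_congr rfl fun j _ => ?_
        simp [Matrix.add_apply, Matrix.smul_apply, Matrix.map_apply, Complex.mul_re,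
          Complex.mul_im, hu, hv]
        ring
      rw [this]
      simp only [Finset.sum_add_distrib, Finset.sum_sub_distrib]
    have him : (quadF (B.map (fun x => (x : ℂ)) + Complex.I • C.map (fun x => (x : ℂ))) x).im
        = (∑ i, ∑ j, C i j * u i * u j) + (∑ i, ∑ j, C i j * v i * v j)
          + ((∑ i, ∑ j, B i j * u i * v j) - (∑ i, ∑ j, B i j * v i * u j)) := by
      have : (quadF (B.map (fun x => (x : ℂ)) + Complex.I • C.map (fun x => (x : ℂ))) x).im
          = ∑ i, ∑ j, (C i j * u i * u j + C i j * v i * v j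
              + (B i j * u i * v j - B i j * v i * u j)) := by
        rw [quadF, Complex.im_sum]
        refine Finset.sum_congr rfl fun i _ => ?_
        rw [Complex.im_sum]
        refine Finset.sum_congr rfl fun j _ => ?_
        simp [Matrix.add_apply, Matrix.smul_apply, Matrix.map_apply, Complex.mul_re,
          Complex.mul_im, hu, hv]
        ring
      rw [this]
      simp only [Finset.sum_add_distrib, Finset.sum_sub_distrib]
    have huv : u ≠ 0 ∨ v ≠ 0 := by
      obtain ⟨i, hi⟩ := Function.ne_iff.mp hx
      by_cases h1 : (x i).re = 0
      · right; intro h0; apply hi; apply Complex.ext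
        · simpa using h1
        · simpa using congrFun h0 i
      · left; intro h0; exact h1 (by simpa using congrFun h0 i)
    have key : ∀ (D : Matrix (Fin N) (Fin N) ℝ), D.PosDef →
        0 < (∑ i, ∑ j, D i j * u i * u j) + (∑ i, ∑ j, D i j * v i * v j) := by
      intro D hD
      rcases huv with h | h
      · exact add_pos_of_pos_of_nonneg (posdef_quad hD u h) (possemidef_quad hD v)
      · exact add_pos_of_nonneg_of_pos (possemidef_quad hD u) (posdef_quad hD v h)
    constructor
    · rw [hre, sum_swap_symm hCs v u]
      simpa using key B hBp
    · rw [him, sum_swap_symm hBs u v]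
      simpa using key C hCp

lemma diag_pos {N : ℕ} {k : ℕ} {M : Matrix (Fin N) (Fin N) ℂ}
    (h : ActiveCSPD k M) (K : Fin N) (hK : k ≤ (K : ℕ)) :
    0 < (M K K).re ∧ 0 < (M K K).im := by
  have hmain := h.2 (fun i => if i = K then 1 else 0)
    (fun i hi => by
      simp only [ite_eq_right_iff]
      intro he; exact absurd hi (by simp [he]; omega))
    (fun h0 => by simpa using congrFun h0 K)
  have hq : quadF M (fun i => if i = K then 1 else 0) = M K K := by
    rw [quadF]
    rw [Finset.sum_eq_single K]
    · rw [Finset.sum_eq_single K] <;> simp +contextual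
    · intro i _ hi
      apply Finset.sum_eq_zero
      intro j _
      simp [hi]
    · simp
  rwa [hq] at hmain

lemma step_active {N : ℕ} {k : ℕ} {M : Matrix (Fin N) (Fin N) ℂ} (hk : k < N)
    (h : ActiveCSPD k M) : ActiveCSPD (k + 1) (elimStep ⟨k, hk⟩ M) := by
  set K : Fin N := ⟨k, hk⟩ with hKdef
  have hkK : k ≤ (K : ℕ) := le_refl k
  have hKK : 0 < (M K K).re := (diag_pos h K hkK).1
  have hKne : M K K ≠ 0 := fun h0 => by simp [h0] at hKK
  constructor
  · intro i j hi hj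
    have hKi : K < i := by simpa [hKdef, Fin.lt_def] using hi
    have hKj : K < j := by simpa [hKdef, Fin.lt_def] using hj
    have e1 : M i j = M j i := h.1 i j (le_of_lt hKi) (le_of_lt hKj)
    have e2 : M i K = M K i := h.1 i K (le_of_lt hKi) hkK
    have e3 : M j K = M K j := h.1 j K (le_of_lt hKj) hkK
    simp only [elimStep]
    rw [if_pos (show K < i ∧ K < j from ⟨hKi, hKj⟩),
      if_pos (show K < j ∧ K < i from ⟨hKj, hKi⟩), e1, ← e2, ← e3]
    ring
  · intro x hx hx0
    set s : ℂ := ∑ j, M K j * x j with hs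
    set y : Fin N → ℂ := fun i => if i = K then -(M K K)⁻¹ * s else x i with hy
    have hxK : x K = 0 := hx K (by simp [hKdef])
    have hysup : ∀ i : Fin N, (i : ℕ) < k → y i = 0 := by
      intro i hi
      have hiK : i ≠ K := fun he => by simp [he, hKdef] at hi
      simp [hy, hiK, hx i (Nat.lt_succ_of_lt hi)]
    have hy0 : y ≠ 0 := by
      obtain ⟨i, hi⟩ := Function.ne_iff.mp hx0
      have hik : k + 1 ≤ (i : ℕ) := by
        by_contra hlt
        exact hi (hx i (Nat.lt_of_not_le hlt))
      have hiK : i ≠ K := fun he => absurd hik (by simp [he, hKdef])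
      intro h0
      exact hi (by simpa [hy, hiK] using congrFun h0 i)
    have hrow : ∀ i : Fin N,
        (∑ j, M i j * y j) = (∑ j, M i j * x j) + M i K * (-(M K K)⁻¹ * s) := by
      intro i
      have hterm : ∀ j : Fin N, M i j * y j = M i j * x j
          + (if j = K then M i K * (-(M K K)⁻¹ * s) - M i K * x K else 0) := by
        intro j
        by_cases hj : j = K
        · subst hj; simp [hy]
        · simp [hy, hj]
      rw [Finset.sum_congr rfl fun j _ => hterm j]
      rw [Finset.sum_add_distrib, Finset.sum_ite_eq' Finset.univ K]
      simp [hxK]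
    have key : ∀ i : Fin N,
        (starRingEnd ℂ) (y i) * ∑ j, M i j * y j
          = (starRingEnd ℂ) (x i) * ∑ j, elimStep K M i j * x j := by
      intro i
      by_cases hiK : i = K
      · rw [hiK, hrow K, ← hs, hxK]
        have hz : s + M K K * (-(M K K)⁻¹ * s) = 0 := by field_simp; ring
        rw [hz]
        simp
      · by_cases hxi : x i = 0
        · simp [hy, hiK, hxi]
        · have hik : k + 1 ≤ (i : ℕ) := by
            by_contra hlt
            exact hxi (hx i (Nat.lt_of_not_le hlt))
          have hKi : K < i := by simpa [hKdef, Fin.lt_def] using hik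
          have hyi : y i = x i := by simp [hy, hiK]
          rw [hyi, hrow i]
          congr 1
          rw [hs, Finset.mul_sum, Finset.mul_sum, ← Finset.sum_add_distrib]
          refine Finset.sum_congr rfl fun j _ => ?_
          by_cases hKj : K < j
          · simp only [elimStep]
            rw [if_pos (show K < i ∧ K < j from ⟨hKi, hKj⟩)]
            ring
          · have hxj : x j = 0 := hx j (by simp [Fin.lt_def, hKdef] at hKj ⊢; omega)
            simp [hxj]
    have hq : quadF (elimStep K M) x = quadF M y := by
      rw [quadF, quadF]
      refine Finset.sum_congr rfl fun i _ => ?_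
      simp only [mul_assoc, ← Finset.mul_sum]
      exact (key i).symm
    rw [hq]
    exact h.2 y hysup hy0

lemma iter_active {N : ℕ} {A : Matrix (Fin N) (Fin N) ℂ} (hA : IsCSPD A) :
    ∀ k, k ≤ N → ActiveCSPD k (elimIter A k) := by
  intro k
  induction k with
  | zero => intro _; exact base_active hA
  | succ m ih =>
    intro hm
    have hmN : m < N := Nat.lt_of_succ_le hm
    have : elimIter A (m + 1) = elimStep ⟨m, hmN⟩ (elimIter A m) := by
      simp [elimIter, hmN]
    rw [this]
    exact step_active hmN (ih (le_of_lt hmN))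

lemma frozen {N : ℕ} (A : Matrix (Fin N) (Fin N) ℂ) (i j : Fin N) (k : ℕ)
    (hij : (i : ℕ) ≤ k ∨ (j : ℕ) ≤ k) :
    ∀ m, k ≤ m → elimIter A m i j = elimIter A k i j := by
  intro m hm
  induction m with
  | zero => rw [Nat.le_zero.mp hm]
  | succ m ih =>
    rcases Nat.lt_or_ge k (m + 1) with hlt | hge
    · have hkm : k ≤ m := Nat.lt_succ_iff.mp hlt
      rw [← ih hkm]
      show elimIter A (m + 1) i j = elimIter A m i j
      by_cases hmN : m < N
      · have : elimIter A (m + 1) = elimStep ⟨m, hmN⟩ (elimIter A m) := by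
          simp [elimIter, hmN]
        rw [this, elimStep]
        rw [if_neg]
        rintro ⟨h1, h2⟩
        rw [Fin.lt_def] at h1 h2
        have h1' : m < (i : ℕ) := h1
        have h2' : m < (j : ℕ) := h2
        rcases hij with hle | hle <;> omega
      · simp [elimIter, hmN]
    · have : k = m + 1 := le_antisymm hm hge
      rw [this]

lemma abs_le_diag {N : ℕ} {k : ℕ} {M : Matrix (Fin N) (Fin N) ℂ}
    (h : ActiveCSPD k M) {i j : Fin N} (hi : k ≤ (i : ℕ)) (hj : k ≤ (j : ℕ)) :
    ‖M i j‖ ≤ max (‖M i i‖) (‖M j j‖) := by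
  by_cases hij : i = j
  · rw [hij]; exact le_max_right _ _
  · have hsym : M j i = M i j := h.1 j i hj hi
    have hbii := diag_pos h i hi
    have hbjj := diag_pos h j hj
    have hform : ∀ a b : ℝ, ¬(a = 0 ∧ b = 0) →
        0 < a ^ 2 * (M i i).re + 2 * a * b * (M i j).re + b ^ 2 * (M j j).re ∧
        0 < a ^ 2 * (M i i).im + 2 * a * b * (M i j).im + b ^ 2 * (M j j).im := by
      intro a b hab
      set x : Fin N → ℂ := fun q => (if q = i then (a : ℂ) else 0) + (if q = j then (b : ℂ) else 0)
        with hxd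
      have hsupp : ∀ p : Fin N, (p : ℕ) < k → x p = 0 := by
        intro p hp
        have hpi : p ≠ i := fun he => by rw [he] at hp; omega
        have hpj : p ≠ j := fun he => by rw [he] at hp; omega
        simp [hxd, hpi, hpj]
      have hx0 : x ≠ 0 := by
        intro h0
        apply hab
        constructor
        · have := congrFun h0 i
          simp [hxd, hij] at this
          exact_mod_cast this
        · have := congrFun h0 j
          simp [hxd, (Ne.symm hij : j ≠ i)] at this
          exact_mod_cast this
      have hquad : quadF M x
          = ((a ^ 2 : ℝ) : ℂ) * M i i + ((2 * a * b : ℝ) : ℂ) * M i j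
            + ((b ^ 2 : ℝ) : ℂ) * M j j := by
        rw [quadF]
        have hterm : ∀ p q : Fin N, (starRingEnd ℂ) (x p) * M p q * x q
            = ((if p = i then (a : ℂ) else 0) * M p q * ((if q = i then (a : ℂ) else 0)
                + (if q = j then (b : ℂ) else 0)))
              + ((if p = j then (b : ℂ) else 0) * M p q * ((if q = i then (a : ℂ) else 0)
                + (if q = j then (b : ℂ) else 0))) := by
          intro p q
          have : (starRingEnd ℂ) (x p)
              = (if p = i then (a : ℂ) else 0) + (if p = j then (b : ℂ) else 0) := by
            simp [hxd, apply_ite (starRingEnd ℂ), Complex.conj_ofReal]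
          rw [this]
          ring
        rw [Finset.sum_congr rfl fun p _ => Finset.sum_congr rfl fun q _ => hterm p q]
        simp only [Finset.sum_add_distrib, mul_add, add_mul, mul_ite, ite_mul, mul_zero,
          zero_mul, Finset.sum_ite_irrel, Finset.sum_const_zero, Finset.sum_ite_eq',
          Finset.mem_univ, if_true]
        rw [hsym]
        push_cast
        ring
      have hpos := h.2 x hsupp hx0
      rw [hquad] at hpos
      obtain ⟨h1, h2⟩ := hpos
      constructor
      · simp only [Complex.add_re, Complex.mul_re, Complex.ofReal_re, Complex.ofReal_im,
          zero_mul, sub_zero] at h1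
        linarith
      · simp only [Complex.add_im, Complex.mul_im, Complex.ofReal_re, Complex.ofReal_im,
          zero_mul, add_zero] at h2
        linarith
    have hb : (M i j).re ^ 2 ≤ (M i i).re * (M j j).re := by
      have h0 : 0 < (M i i).re := hbii.1
      have ht := (hform ((M i j).re) (-(M i i).re) (fun hc => by linarith [hc.2])).1
      nlinarith [h0]
    have hc : (M i j).im ^ 2 ≤ (M i i).im * (M j j).im := by
      have h0 : 0 < (M i i).im := hbii.2
      have ht := (hform ((M i j).im) (-(M i i).im) (fun hc => by linarith [hc.2])).2
      nlinarith [h0]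
    set X := ‖M i j‖
    set Y := ‖M i i‖
    set Z := ‖M j j‖
    have hX2 : X ^ 2 = (M i j).re ^ 2 + (M i j).im ^ 2 := by
      rw [Complex.sq_norm, Complex.normSq_apply]; ring
    have hY2 : Y ^ 2 = (M i i).re ^ 2 + (M i i).im ^ 2 := by
      rw [Complex.sq_norm, Complex.normSq_apply]; ring
    have hZ2 : Z ^ 2 = (M j j).re ^ 2 + (M j j).im ^ 2 := by
      rw [Complex.sq_norm, Complex.normSq_apply]; ring
    have hXn : 0 ≤ X := norm_nonneg _
    have hYn : 0 ≤ Y := norm_nonneg _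
    have hZn : 0 ≤ Z := norm_nonneg _
    have hP : (M i i).re * (M j j).re + (M i i).im * (M j j).im ≤ Y * Z := by
      nlinarith [sq_nonneg ((M i i).re * (M j j).im - (M i i).im * (M j j).re),
        mul_nonneg hYn hZn, hbii.1, hbii.2, hbjj.1, hbjj.2, sq_nonneg (Y * Z)]
    have hXYZ : X ^ 2 ≤ Y * Z := by nlinarith
    have hmax : Y * Z ≤ max Y Z * max Y Z := by
      have h1 : Y ≤ max Y Z := le_max_left _ _
      have h2 : Z ≤ max Y Z := le_max_right _ _
      have h3 : 0 ≤ max Y Z := le_trans hYn h1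
      nlinarith
    nlinarith [le_trans hYn (le_max_left Y Z)]

/-- For a CSPD (Higham) matrix, the growth factor of Gaussian elimination
without pivoting is attained on diagonal entries:
`max_{i,j,k} |a_{ij}^{(k)}| / max_{i,j} |a_{ij}|
  = max_{j,k} |a_{jj}^{(k)}| / max_j |a_{jj}|`. -/
theorem growth_factor_diagonal_cspd {n : ℕ}
    (A : Matrix (Fin (n + 1)) (Fin (n + 1)) ℂ) (hA : IsCSPD A) :
    ((Finset.range (n + 1)).product
          ((Finset.univ : Finset (Fin (n + 1))).product Finset.univ)).sup'
        (Finset.Nonempty.product ⟨0, by simp⟩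
          (Finset.Nonempty.product Finset.univ_nonempty Finset.univ_nonempty))
        (fun p => ‖elimIter A p.1 p.2.1 p.2.2‖) /
      (Finset.univ.sup' Finset.univ_nonempty
        fun p : Fin (n + 1) × Fin (n + 1) => ‖A p.1 p.2‖) =
    ((Finset.range (n + 1)).product (Finset.univ : Finset (Fin (n + 1)))).sup'
        (Finset.Nonempty.product ⟨0, by simp⟩ Finset.univ_nonempty)
        (fun p => ‖elimIter A p.1 p.2 p.2‖) /
      (Finset.univ.sup' Finset.univ_nonempty
        fun j : Fin (n + 1) => ‖A j j‖) := by
  have hact : ∀ k, k ≤ n + 1 → ActiveCSPD k (elimIter A k) := iter_active hA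
  have hact0 : ActiveCSPD 0 A := base_active hA
  have hnum :
      ((Finset.range (n + 1)).product
          ((Finset.univ : Finset (Fin (n + 1))).product Finset.univ)).sup'
        (Finset.Nonempty.product ⟨0, by simp⟩
          (Finset.Nonempty.product Finset.univ_nonempty Finset.univ_nonempty))
        (fun p => ‖elimIter A p.1 p.2.1 p.2.2‖) =
      ((Finset.range (n + 1)).product (Finset.univ : Finset (Fin (n + 1)))).sup'
        (Finset.Nonempty.product ⟨0, by simp⟩ Finset.univ_nonempty)
        (fun p => ‖elimIter A p.1 p.2 p.2‖) := by
    apply le_antisymm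
    · apply Finset.sup'_le
      rintro ⟨k, i, j⟩ hp
      have hp1 : k ∈ Finset.range (n + 1) := (Finset.mem_product.mp hp).1
      have hk : k ≤ n := Nat.lt_succ_iff.mp (Finset.mem_range.mp hp1)
      set m : ℕ := min k (min (i : ℕ) (j : ℕ)) with hm
      have hmk : m ≤ k := min_le_left _ _
      have hmi : m ≤ (i : ℕ) := le_trans (min_le_right _ _) (min_le_left _ _)
      have hmj : m ≤ (j : ℕ) := le_trans (min_le_right _ _) (min_le_right _ _)
      have hfr : elimIter A k i j = elimIter A m i j := by
        rcases le_or_gt k (min (i : ℕ) (j : ℕ)) with hle | hlt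
        · rw [hm, min_eq_left hle]
        · have hme : m = min (i : ℕ) (j : ℕ) := by rw [hm, min_eq_right hlt.le]
          rw [hme]
          apply frozen A i j _ _ k hlt.le
          rcases le_total (i : ℕ) (j : ℕ) with hle | hle
          · exact Or.inl (le_of_eq (min_eq_left hle).symm)
          · exact Or.inr (le_of_eq (min_eq_right hle).symm)
      have hdiag := abs_le_diag (hact m (le_trans hmk (le_trans hk (Nat.le_succ n))))
        hmi hmj
      simp only []
      rw [hfr]
      refine le_trans hdiag (max_le ?_ ?_)
      · exact Finset.le_sup' (b := (m, i)) (f := fun p : ℕ × Fin (n + 1) =>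
          ‖elimIter A p.1 p.2 p.2‖)
          (Finset.mem_product.mpr ⟨Finset.mem_range.mpr (by omega), Finset.mem_univ i⟩)
      · exact Finset.le_sup' (b := (m, j)) (f := fun p : ℕ × Fin (n + 1) =>
          ‖elimIter A p.1 p.2 p.2‖)
          (Finset.mem_product.mpr ⟨Finset.mem_range.mpr (by omega), Finset.mem_univ j⟩)
    · apply Finset.sup'_le
      rintro ⟨k, j⟩ hp
      have hp1 : k ∈ Finset.range (n + 1) := (Finset.mem_product.mp hp).1
      exact Finset.le_sup' (b := (k, (j, j))) (f := fun p : ℕ × (Fin (n + 1) × Fin (n + 1)) =>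
        ‖elimIter A p.1 p.2.1 p.2.2‖)
        (Finset.mem_product.mpr ⟨hp1, Finset.mem_product.mpr ⟨Finset.mem_univ j,
          Finset.mem_univ j⟩⟩)
  have hden :
      (Finset.univ.sup' Finset.univ_nonempty
        fun p : Fin (n + 1) × Fin (n + 1) => ‖A p.1 p.2‖) =
      (Finset.univ.sup' Finset.univ_nonempty
        fun j : Fin (n + 1) => ‖A j j‖) := by
    apply le_antisymm
    · apply Finset.sup'_le
      rintro ⟨i, j⟩ _
      have hdiag := abs_le_diag hact0 (Nat.zero_le (i : ℕ)) (Nat.zero_le (j : ℕ))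
      refine le_trans hdiag (max_le ?_ ?_)
      · exact Finset.le_sup' (b := i) (f := fun j : Fin (n + 1) => ‖A j j‖)
          (Finset.mem_univ i)
      · exact Finset.le_sup' (b := j) (f := fun j : Fin (n + 1) => ‖A j j‖)
          (Finset.mem_univ j)
    · apply Finset.sup'_le
      intro j _
      exact Finset.le_sup' (b := (j, j)) (f := fun p : Fin (n + 1) × Fin (n + 1) =>
        ‖A p.1 p.2‖) (Finset.mem_univ (j, j))
  rw [hnum, hden]
end
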